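/- Let w = W1·[i]·[j]·W2·[i]·W3 be a 12-representant of a labeled graph G, where the letter i occurs exactly at the two displayed positions and j < i. Then w' = W1·[j]·[i]·W2·[i]·W3 is also a 12-representant of G. -/
import Mathlib

/-- Some occurrence of `i` comes strictly before some occurrence of `j` in `w`. -/
def Occ {n : ℕ} (w : List (Fin n)) (i j : Fin n) : Prop :=
  ∃ p q : Fin w.length, p < q ∧ w.get p = i ∧ w.get q = j

/-- The word `w` over `[n]` 12-represents the labeled graph `G` on `Fin n`:
every letter occurs at least once, and for `i < j`, `i` and `j` are adjacent
iff no occurrence of `i` comes before any occurrence of `j`. -/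
def Represents {n : ℕ} (G : SimpleGraph (Fin n)) (w : List (Fin n)) : Prop :=
  (∀ v : Fin n, v ∈ w) ∧ ∀ i j : Fin n, i < j → (G.Adj i j ↔ ¬ Occ w i j)

/-- `b` is a bad vertex of `G`. -/
def Bad {n : ℕ} (G : SimpleGraph (Fin n)) (b : Fin n) : Prop :=
  ∃ a c : Fin n, a < b ∧ b < c ∧ ¬ G.Adj a b ∧ ¬ G.Adj b c ∧ G.Adj a c

lemma occ_iff {n : ℕ} (w : List (Fin n)) (a b : Fin n) :
    Occ w a b ↔ ∃ A B : List (Fin n), w = A ++ B ∧ a ∈ A ∧ b ∈ B := by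
  constructor
  · rintro ⟨p, q, hpq, hp, hq⟩
    have hpq' : (p:ℕ) < q := hpq
    have hq2 : (q:ℕ) < w.length := q.2
    obtain ⟨k, hk⟩ : ∃ k, (q:ℕ) = (p:ℕ) + 1 + k := ⟨q - (p+1), by omega⟩
    refine ⟨w.take (p+1), w.drop (p+1), (List.take_append_drop _ _).symm, ?_, ?_⟩
    · rw [List.mem_iff_getElem]
      exact ⟨p, by simp [Nat.lt_min, p.2], by simpa using hp⟩
    · rw [List.mem_iff_getElem]
      refine ⟨k, by simp [List.length_drop]; omega, ?_⟩
      rw [List.getElem_drop]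
      simp only [List.get_eq_getElem] at hq
      convert hq using 2
      omega
  · rintro ⟨A, B, rfl, ha, hb⟩
    rw [List.mem_iff_getElem] at ha hb
    obtain ⟨p, hp, hpa⟩ := ha
    obtain ⟨q, hq, hqb⟩ := hb
    refine ⟨⟨p, by simp; omega⟩, ⟨A.length + q, by simp; omega⟩, by simp [Fin.lt_def]; omega, ?_, ?_⟩
    · simpa [List.getElem_append_left, hp] using hpa
    · simp only [List.get_eq_getElem]
      rw [List.getElem_append_right (by omega)]
      simpa using hqb

lemma occ_single {n : ℕ} (x a b : Fin n) : ¬ Occ [x] a b := by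
  rintro ⟨p, q, hpq, -, -⟩
  have hp : (p:ℕ) < 1 := p.2
  have hq : (q:ℕ) < 1 := q.2
  have : (p:ℕ) < q := hpq
  omega

lemma occ_append {n : ℕ} (A B : List (Fin n)) (a b : Fin n) :
    Occ (A ++ B) a b ↔ Occ A a b ∨ Occ B a b ∨ (a ∈ A ∧ b ∈ B) := by
  simp only [occ_iff]
  constructor
  · rintro ⟨C, D, h, ha, hb⟩
    rw [List.append_eq_append_iff] at h
    rcases h with ⟨E, rfl, rfl⟩ | ⟨E, rfl, rfl⟩
    · rcases List.mem_append.mp ha with ha' | ha'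
      · exact Or.inr (Or.inr ⟨ha', List.mem_append.mpr (Or.inr hb)⟩)
      · exact Or.inr (Or.inl ⟨E, D, rfl, ha', hb⟩)
    · rcases List.mem_append.mp hb with hb' | hb'
      · exact Or.inl ⟨C, E, rfl, ha, hb'⟩
      · exact Or.inr (Or.inr ⟨List.mem_append.mpr (Or.inl ha), hb'⟩)
  · rintro (⟨C, D, rfl, ha, hb⟩ | ⟨C, D, rfl, ha, hb⟩ | ⟨ha, hb⟩)
    · exact ⟨C, D ++ B, by simp, ha, by simp [hb]⟩
    · exact ⟨A ++ C, D, by simp, by simp [ha], hb⟩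
    · exact ⟨A, B, rfl, ha, hb⟩

lemma prop_key (O1 O2 O3 A1 A2 Ai Aj Bi Bj B2 B3 : Prop) (hne : ¬(Ai ∧ Bj)) :
    ((((O1 ∨ A1 ∧ Bi) ∨ (A1 ∨ Ai) ∧ Bj) ∨ O2 ∨ ((A1 ∨ Ai) ∨ Aj) ∧ B2) ∨
        (((A1 ∨ Ai) ∨ Aj) ∨ A2) ∧ Bi) ∨
      O3 ∨ ((((A1 ∨ Ai) ∨ Aj) ∨ A2) ∨ Ai) ∧ B3 ↔
    ((((O1 ∨ A1 ∧ Bj) ∨ (A1 ∨ Aj) ∧ Bi) ∨ O2 ∨ ((A1 ∨ Aj) ∨ Ai) ∧ B2) ∨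
        (((A1 ∨ Aj) ∨ Ai) ∨ A2) ∧ Bi) ∨
      O3 ∨ ((((A1 ∨ Aj) ∨ Ai) ∨ A2) ∨ Ai) ∧ B3 := by
  itauto

lemma occ_swap {n : ℕ} (i j : Fin n) (W1 W2 W3 : List (Fin n)) (a b : Fin n)
    (hne : ¬(a = i ∧ b = j)) :
    Occ (W1 ++ [i] ++ [j] ++ W2 ++ [i] ++ W3) a b ↔
      Occ (W1 ++ [j] ++ [i] ++ W2 ++ [i] ++ W3) a b := by
  simp only [occ_append, occ_single, List.mem_append, List.mem_singleton, false_or, or_false,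
    false_and, and_false]
  exact prop_key (Occ W1 a b) (Occ W2 a b) (Occ W3 a b) (a ∈ W1) (a ∈ W2)
    (a = i) (a = j) (b = i) (b = j) (b ∈ W2) (b ∈ W3) hne

theorem stmt5 (n : ℕ) (G : SimpleGraph (Fin n)) (i j : Fin n)
    (W1 W2 W3 : List (Fin n))
    (hw : Represents G (W1 ++ [i] ++ [j] ++ W2 ++ [i] ++ W3))
    (h1 : i ∉ W1) (h2 : i ∉ W2) (h3 : i ∉ W3) (hij : i ≠ j)
    (hji : j < i) :
    Represents G (W1 ++ [j] ++ [i] ++ W2 ++ [i] ++ W3) := by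
  obtain ⟨hmem, hadj⟩ := hw
  constructor
  · intro v
    have := hmem v
    simp only [List.mem_append, List.mem_singleton] at this ⊢
    tauto
  · intro a b hab
    rw [hadj a b hab]
    refine not_congr (occ_swap i j W1 W2 W3 a b ?_)
    rintro ⟨rfl, rfl⟩
    exact lt_asymm hji hab
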